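/- Let n ≥ 2, φ > 0, and let G be a simple undirected graph on n vertices with adjacency matrix entries G_ij ∈ {0,1}, degrees d_i ∈ {0,...,n−1}, and productivities θ_i ∈ (0,1]. Define the matrix A by A_ii = (n+1)²φ/(θ_i(n−d_i)) − θ_i(n−d_i) and, for j ≠ i, A_ij = (1+d_j)θ_j − (n+1)G_ij θ_j. If φ > n[(n−1)² + n]/(n+1)², then for every row i, |A_ii| > Σ_{j≠i} |A_ij|, and hence A is nonsingular. -/

import Mathlib

theorem stmt1 (n : ℕ) (hn : 2 ≤ n) (φ : ℝ) (hφ0 : 0 < φ)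
    (G : Matrix (Fin n) (Fin n) ℝ)
    (hG01 : ∀ i j, G i j = 0 ∨ G i j = 1)
    (hGsymm : ∀ i j, G i j = G j i) (hGdiag : ∀ i, G i i = 0)
    (θ : Fin n → ℝ) (hθ : ∀ i, θ i ∈ Set.Ioc (0:ℝ) 1)
    (d : Fin n → ℝ) (hd : ∀ i, d i = ∑ j, G i j)
    (A : Matrix (Fin n) (Fin n) ℝ)
    (hA : ∀ i j, A i j =
      if i = j then ((n:ℝ)+1)^2 * φ / (θ i * ((n:ℝ) - d i)) - θ i * ((n:ℝ) - d i)
      else (1 + d j) * θ j - ((n:ℝ)+1) * G i j * θ j)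
    (hφ : φ > (n:ℝ) * (((n:ℝ)-1)^2 + (n:ℝ)) / ((n:ℝ)+1)^2) :
    (∀ i, ∑ j ∈ Finset.univ.erase i, |A i j| < |A i i|) ∧ A.det ≠ 0 := by
  have hn1 : (1:ℝ) ≤ (n:ℝ) := by exact_mod_cast Nat.one_le_of_lt hn
  have hn2 : (2:ℝ) ≤ (n:ℝ) := by exact_mod_cast hn
  have hd0 : ∀ j, 0 ≤ d j := by
    intro j; rw [hd]
    apply Finset.sum_nonneg; intro k _
    rcases hG01 j k with h | h <;> simp [h]
  have hdle : ∀ j, d j ≤ (n:ℝ) - 1 := by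
    intro j; rw [hd]
    rw [← Finset.add_sum_erase _ _ (Finset.mem_univ j), hGdiag, zero_add]
    calc ∑ k ∈ Finset.univ.erase j, G j k ≤ ∑ _k ∈ Finset.univ.erase j, (1:ℝ) := by
          apply Finset.sum_le_sum; intro k _
          rcases hG01 j k with h | h <;> simp [h]
      _ = (n:ℝ) - 1 := by
          rw [Finset.sum_const, Finset.card_erase_of_mem (Finset.mem_univ j)]
          simp
          rw [Nat.cast_sub (Nat.one_le_of_lt hn)]
          simp
  -- off diagonal entry bound
  have key : ∀ i, ∑ j ∈ Finset.univ.erase i, |A i j| < |A i i| := by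
    intro i
    have hoff : ∀ j ∈ Finset.univ.erase i, |A i j| ≤ (n:ℝ) - 1 := by
      intro j hj
      have hji : j ≠ i := Finset.ne_of_mem_erase hj
      have hij : i ≠ j := hji.symm
      have hAij : A i j = (1 + d j) * θ j - ((n:ℝ)+1) * G i j * θ j := by
        rw [hA]; simp [hij]
      obtain ⟨hθ0, hθ1⟩ := hθ j
      rcases hG01 i j with h0 | h1
      · -- d j ≤ n - 2
        have hdj : d j ≤ (n:ℝ) - 2 := by
          rw [hd]
          rw [← Finset.add_sum_erase _ _ (Finset.mem_univ j), hGdiag, zero_add]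
          have hiu : i ∈ Finset.univ.erase j := Finset.mem_erase.2 ⟨hij, Finset.mem_univ i⟩
          rw [← Finset.add_sum_erase _ _ hiu, ← hGsymm, h0, zero_add]
          calc ∑ k ∈ (Finset.univ.erase j).erase i, G j k
              ≤ ∑ _k ∈ (Finset.univ.erase j).erase i, (1:ℝ) := by
                apply Finset.sum_le_sum; intro k _
                rcases hG01 j k with h | h <;> simp [h]
            _ = (n:ℝ) - 2 := by
                rw [Finset.sum_const, Finset.card_erase_of_mem hiu,
                  Finset.card_erase_of_mem (Finset.mem_univ j)]
                rw [Finset.card_univ, Fintype.card_fin, show n - 1 - 1 = n - 2 from by omega, nsmul_eq_mul, Nat.cast_sub (by omega)]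
                norm_num
        rw [hAij, h0]
        have h1 : (0:ℝ) ≤ (1 + d j) * θ j := mul_nonneg (by linarith [hd0 j]) hθ0.le
        rw [mul_zero, zero_mul, sub_zero, abs_of_nonneg h1]
        nlinarith [hd0 j]
      · -- G i j = 1, d j ≥ 1
        have hdj : 1 ≤ d j := by
          rw [hd]
          calc (1:ℝ) = G j i := by rw [← hGsymm, h1]
            _ ≤ ∑ k, G j k := Finset.single_le_sum (f := fun k => G j k)
                (fun k _ => by rcases hG01 j k with h | h <;> simp [h]) (Finset.mem_univ i)
        rw [hAij, h1]
        have heq : (1 + d j) * θ j - ((n:ℝ)+1) * 1 * θ j = -(((n:ℝ) - d j) * θ j) := by ring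
        rw [heq, abs_neg]
        have h2 : (0:ℝ) ≤ ((n:ℝ) - d j) * θ j := by
          apply mul_nonneg _ hθ0.le
          nlinarith [hdle j]
        rw [abs_of_nonneg h2]
        nlinarith [hdle j]
    have hsum : ∑ j ∈ Finset.univ.erase i, |A i j| ≤ ((n:ℝ) - 1) * ((n:ℝ) - 1) := by
      calc ∑ j ∈ Finset.univ.erase i, |A i j| ≤ ∑ _j ∈ Finset.univ.erase i, ((n:ℝ) - 1) :=
            Finset.sum_le_sum hoff
        _ = ((n:ℝ) - 1) * ((n:ℝ) - 1) := by
            rw [Finset.sum_const, Finset.card_erase_of_mem (Finset.mem_univ i)]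
            simp only [Finset.card_univ, Fintype.card_fin, nsmul_eq_mul]
            rw [Nat.cast_sub (Nat.one_le_of_lt hn)]
            push_cast; ring
    -- diagonal bound
    obtain ⟨hθ0, hθ1⟩ := hθ i
    set s : ℝ := θ i * ((n:ℝ) - d i) with hs
    have hsp : 0 < s := by
      apply mul_pos hθ0; nlinarith [hdle i]
    have hsn : s ≤ (n:ℝ) := by
      have h1 : (n:ℝ) - d i ≤ (n:ℝ) := by nlinarith [hd0 i]
      nlinarith
    have hAii : A i i = ((n:ℝ)+1)^2 * φ / s - s := by rw [hA]; simp [hs]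
    have hnum : 0 < ((n:ℝ)+1)^2 * φ := by positivity
    have hdiv : ((n:ℝ)+1)^2 * φ / (n:ℝ) ≤ ((n:ℝ)+1)^2 * φ / s :=
      div_le_div_of_nonneg_left hnum.le hsp hsn
    have hlb : (((n:ℝ)-1)^2 + (n:ℝ)) < ((n:ℝ)+1)^2 * φ / (n:ℝ) := by
      rw [lt_div_iff₀ (by linarith : (0:ℝ) < (n:ℝ))]
      have := (div_lt_iff₀ (by positivity : (0:ℝ) < ((n:ℝ)+1)^2)).1 hφ
      nlinarith
    have hApos : ((n:ℝ)-1) * ((n:ℝ)-1) < A i i := by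
      rw [hAii]
      nlinarith
    have hAnn : 0 ≤ A i i := by nlinarith
    rw [abs_of_nonneg hAnn]
    exact lt_of_le_of_lt hsum hApos
  refine ⟨key, det_ne_zero_of_sum_row_lt_diag ?_⟩
  intro k
  simpa [Real.norm_eq_abs] using key k
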